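/- For every x ∈ (0,1) and b > 0, setting κ(x,b) = (√(1-x)·b - √(1+x))/(√(1-x)·b + √(1+x)) and ψ̄ = (b² - 1)/(b² + 1), one has 1/2 - (2/π)·arctan(κ(x,b)) = (1/π)·arccos((ψ̄ - x)/(1 - ψ̄ x)). In particular (ψ̄ - x)/(1 - ψ̄ x) ∈ [-1,1], so the arccosine is well defined. -/

import Mathlib

/-- For `x ∈ (0,1)` and `b > 0`, with
`κ(x,b) = (√(1-x)·b - √(1+x))/(√(1-x)·b + √(1+x))` and `ψ̄ = (b²-1)/(b²+1)`, one has
`1/2 - (2/π)·arctan(κ(x,b)) = (1/π)·arccos((ψ̄-x)/(1-ψ̄x))`, the argument of the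
arccosine lying in `[-1,1]`. -/
theorem half_sub_arctan_eq_arccos (x b : ℝ) (hx : x ∈ Set.Ioo (0 : ℝ) 1) (hb : 0 < b) :
    ((b ^ 2 - 1) / (b ^ 2 + 1) - x) / (1 - (b ^ 2 - 1) / (b ^ 2 + 1) * x)
        ∈ Set.Icc (-1 : ℝ) 1 ∧
    1 / 2 - (2 / Real.pi) * Real.arctan
        ((Real.sqrt (1 - x) * b - Real.sqrt (1 + x)) /
          (Real.sqrt (1 - x) * b + Real.sqrt (1 + x)))
      = (1 / Real.pi) * Real.arccos
          (((b ^ 2 - 1) / (b ^ 2 + 1) - x) / (1 - (b ^ 2 - 1) / (b ^ 2 + 1) * x)) := by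
  obtain ⟨hx0, hx1⟩ := hx
  set a := Real.sqrt (1 - x) with ha_def
  set c := Real.sqrt (1 + x) with hc_def
  have ha : 0 < a := Real.sqrt_pos.2 (by linarith)
  have hc : 0 < c := Real.sqrt_pos.2 (by linarith)
  have ha2 : a ^ 2 = 1 - x := Real.sq_sqrt (by linarith)
  have hc2 : c ^ 2 = 1 + x := Real.sq_sqrt (by linarith)
  set κ := (a * b - c) / (a * b + c) with hκ_def
  have hden : 0 < a * b + c := by positivity
  have hκ1 : κ < 1 := by
    rw [hκ_def, div_lt_one hden]; linarith
  have hκn1 : -1 < κ := by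
    rw [hκ_def, lt_div_iff₀ hden]; nlinarith
  set θ := Real.arctan κ with hθ_def
  have hθlt : θ < Real.pi / 4 := by
    calc θ < Real.arctan 1 := Real.arctan_strictMono hκ1
    _ = Real.pi / 4 := Real.arctan_one
  have hθgt : -(Real.pi / 4) < θ := by
    have : Real.arctan (-1) < θ := Real.arctan_strictMono hκn1
    rwa [Real.arctan_neg, Real.arctan_one] at this
  set y := ((b ^ 2 - 1) / (b ^ 2 + 1) - x) / (1 - (b ^ 2 - 1) / (b ^ 2 + 1) * x) with hy_def
  have hb2 : (0:ℝ) < b ^ 2 + 1 := by positivity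
  have hκsq : (0:ℝ) < 1 + κ ^ 2 := by positivity
  have hsin2 : Real.sin (2 * θ) = 2 * κ / (1 + κ ^ 2) := by
    rw [Real.sin_two_mul, hθ_def, Real.sin_arctan, Real.cos_arctan]
    set s := Real.sqrt (1 + κ ^ 2) with hs_def
    have hs : s ^ 2 = 1 + κ ^ 2 := Real.sq_sqrt hκsq.le
    have hs0 : s ≠ 0 := by
      have : 0 < s := Real.sqrt_pos.2 hκsq
      exact this.ne'
    rw [← hs]; field_simp
  have h2 : 0 < b ^ 2 * (1 - x) + (1 + x) := by nlinarith
  have hne : 1 - (b ^ 2 - 1) / (b ^ 2 + 1) * x ≠ 0 := by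
    have h1 : 1 - (b ^ 2 - 1) / (b ^ 2 + 1) * x = (b ^ 2 * (1 - x) + (1 + x)) / (b ^ 2 + 1) := by
      field_simp; ring
    rw [h1]; positivity
  have hac : (0:ℝ) < a ^ 2 * b ^ 2 + c ^ 2 := by positivity
  have key : y = (a ^ 2 * b ^ 2 - c ^ 2) / (a ^ 2 * b ^ 2 + c ^ 2) := by
    rw [hy_def, ha2, hc2]
    have h2' : b ^ 2 * (1 - x) + (1 + x) ≠ 0 := h2.ne'
    have h3 : 1 + b ^ 2 - b ^ 2 * x + x ≠ 0 := (by linarith : (0:ℝ) < 1 + b ^ 2 - b ^ 2 * x + x).ne'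
    have h4 : b ^ 2 + 1 - (b ^ 2 - 1) * x ≠ 0 := (by linarith : (0:ℝ) < b ^ 2 + 1 - (b ^ 2 - 1) * x).ne'
    field_simp
    ring
  have hR : 2 * κ / (1 + κ ^ 2) = (a ^ 2 * b ^ 2 - c ^ 2) / (a ^ 2 * b ^ 2 + c ^ 2) := by
    rw [hκ_def]
    have hκs : 1 + ((a * b - c) / (a * b + c)) ^ 2 ≠ 0 := by positivity
    field_simp
    ring
  have hyk : y = 2 * κ / (1 + κ ^ 2) := key.trans hR.symm
  have hsy : y = Real.sin (2 * θ) := by rw [hsin2, hyk]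
  have hmem : y ∈ Set.Icc (-1:ℝ) 1 := by
    rw [hsy]; exact ⟨Real.neg_one_le_sin _, Real.sin_le_one _⟩
  refine ⟨hmem, ?_⟩
  have harc : Real.arccos y = Real.pi / 2 - 2 * θ := by
    rw [hsy, ← Real.cos_pi_div_two_sub]
    exact Real.arccos_cos (by linarith) (by linarith [Real.pi_pos])
  rw [harc]
  have hπ : Real.pi ≠ 0 := Real.pi_ne_zero
  have h : Real.pi * (1 / 2 - 2 / Real.pi * θ)
      = Real.pi * (1 / Real.pi * (Real.pi / 2 - 2 * θ)) := by
    field_simp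
  exact mul_left_cancel₀ hπ h
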